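/- arXiv:0706.0319 — 2 statements merged into one kernel-verified Lean document; each statement's English description precedes it below -/
import Mathlib

section
/- Let T ⊆ 2^{<ω} be a Sacks condition (perfect tree) and let A_1, A_2, A_3, … be countably many maximal antichains of T. Then there is a Sacks condition T' ⊆ T such that for every i, the set A_i ∩ T' is a front of T'. -/
/-- `T ⊆ ω^{<ω}` is a tree: closed under initial segments. -/
def IsTreeN (T : Set (List ℕ)) : Prop := ∀ s ∈ T, ∀ t : List ℕ, t <+: s → t ∈ T

/-- Two nodes are comparable (compatible) if one extends the other. -/
def NodeCompat (s t : List ℕ) : Prop := s <+: t ∨ t <+: s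

/-- A splitting node of `T`: a node with at least two immediate successors in `T`. -/
def IsSplitNode (T : Set (List ℕ)) (s : List ℕ) : Prop :=
  s ∈ T ∧ ∃ i j : ℕ, i ≠ j ∧ s ++ [i] ∈ T ∧ s ++ [j] ∈ T

/-- A branch of `T`: a maximal chain in `T`. -/
def IsBranch (T : Set (List ℕ)) (b : Set (List ℕ)) : Prop :=
  b ⊆ T ∧ b.Pairwise NodeCompat ∧
    ∀ b' : Set (List ℕ), b ⊆ b' → b' ⊆ T → b'.Pairwise NodeCompat → b' = b

/-- A front of `T`: pairwise incomparable nodes of `T` met by every branch. -/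
def IsFront (T : Set (List ℕ)) (A : Set (List ℕ)) : Prop :=
  A ⊆ T ∧ (A.Pairwise fun s t => ¬ NodeCompat s t) ∧
    ∀ b : Set (List ℕ), IsBranch T b → ∃ a ∈ A, a ∈ b

/-- A Sacks condition: a nonempty binary tree without leaves such that above
every node there is a splitting node. -/
def IsSacks (T : Set (List ℕ)) : Prop :=
  IsTreeN T ∧ T.Nonempty ∧ (∀ s ∈ T, ∀ k ∈ s, k < 2) ∧
    (∀ s ∈ T, ∃ k : ℕ, s ++ [k] ∈ T) ∧
    (∀ s ∈ T, ∃ t : List ℕ, s <+: t ∧ IsSplitNode T t)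

/- ### Auxiliary lemmas -/

lemma nodeCompat_symm : Symmetric NodeCompat := fun _ _ h => h.symm

lemma compat_of_prefix {p q w : List ℕ} (hp : p <+: w) (hq : q <+: w) : NodeCompat p q :=
  List.prefix_or_prefix_of_prefix hp hq

lemma incompat_of_diff {a p q : List ℕ} {x y : ℕ} (hxy : x ≠ y)
    (hp : a ++ [x] <+: p) (hq : a ++ [y] <+: q) : ¬ NodeCompat p q := by
  intro h
  have key : ∀ w : List ℕ, a ++ [x] <+: w → a ++ [y] <+: w → False := by
    intro w h1 h2
    have h3 := List.prefix_of_prefix_length_le h1 h2 (by simp)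
    have h4 := h3.eq_of_length (by simp)
    exact hxy (by simpa using h4)
  rcases h with h | h
  · exact key q (hp.trans h) hq
  · exact key p hp (hq.trans h)

lemma exists_diff_prefix {α : Type*} :
    ∀ (s u : List α), ¬ s <+: u → ¬ u <+: s →
      ∃ r x y, x ≠ y ∧ r ++ [x] <+: s ∧ r ++ [y] <+: u
  | [], _, h1, _ => absurd List.nil_prefix h1
  | _ :: _, [], _, h2 => absurd List.nil_prefix h2
  | a :: s₁, b :: u₁, h1, h2 => by
    by_cases hab : a = b
    · subst hab
      have h1' : ¬ s₁ <+: u₁ := fun h => h1 (List.cons_prefix_cons.2 ⟨rfl, h⟩)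
      have h2' : ¬ u₁ <+: s₁ := fun h => h2 (List.cons_prefix_cons.2 ⟨rfl, h⟩)
      obtain ⟨r, x, y, hxy, hr1, hr2⟩ := exists_diff_prefix s₁ u₁ h1' h2'
      exact ⟨a :: r, x, y, hxy, List.cons_prefix_cons.2 ⟨rfl, hr1⟩,
        List.cons_prefix_cons.2 ⟨rfl, hr2⟩⟩
    · exact ⟨[], a, b, hab, List.cons_prefix_cons.2 ⟨rfl, List.nil_prefix⟩,
        List.cons_prefix_cons.2 ⟨rfl, List.nil_prefix⟩⟩

lemma exists_diff_suffix {α : Type*} (s u : List α) (h1 : ¬ s <:+ u) (h2 : ¬ u <:+ s) :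
    ∃ r x y, x ≠ y ∧ (x :: r) <:+ s ∧ (y :: r) <:+ u := by
  have h1' : ¬ s.reverse <+: u.reverse := fun h => h1 (List.reverse_prefix.1 h)
  have h2' : ¬ u.reverse <+: s.reverse := fun h => h2 (List.reverse_prefix.1 h)
  obtain ⟨r, x, y, hxy, hr1, hr2⟩ := exists_diff_prefix _ _ h1' h2'
  refine ⟨r.reverse, x, y, hxy, ?_, ?_⟩
  · exact List.reverse_prefix.1 (by simpa using hr1)
  · exact List.reverse_prefix.1 (by simpa using hr2)

lemma exists_append_prefix {t w : List ℕ} (h : t <+: w) (hlt : t.length < w.length) :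
    ∃ k, t ++ [k] <+: w := by
  obtain ⟨d, rfl⟩ := h
  cases d with
  | nil => simp at hlt
  | cons c d => exact ⟨c, ⟨d, by simp⟩⟩

lemma suffix_cons_of_ne {α : Type*} {s u : List α} (h : s <:+ u) (hne : s ≠ u) :
    ∃ ε, (ε :: s) <:+ u := by
  obtain ⟨w, rfl⟩ := h
  rcases List.eq_nil_or_concat w with rfl | ⟨L, ε, rfl⟩
  · simp at hne
  · exact ⟨ε, L, by simp⟩

/-- A simple structural-recursion helper on `List Bool`. -/
def listRecAux {β : Type*} (base : β) (step : Bool → ℕ → β → β) : List Bool → β :=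
  fun l => List.rec base (fun ε s ih => step ε s.length ih) l

/-- Given a Sacks condition `T` and countably many maximal antichains `A i` of `T`,
there is a Sacks condition `T' ⊆ T` such that each `A i ∩ T'` is a front of `T'`. -/
theorem stmt3 (T : Set (List ℕ)) (hT : IsSacks T) (A : ℕ → Set (List ℕ))
    (hA : ∀ i : ℕ, A i ⊆ T ∧ ((A i).Pairwise fun s t => ¬ NodeCompat s t) ∧
      ∀ s ∈ T, ∃ a ∈ A i, NodeCompat s a) :
    ∃ T' : Set (List ℕ), T' ⊆ T ∧ IsSacks T' ∧
      ∀ i : ℕ, IsFront T' (A i ∩ T') := by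
  obtain ⟨htree, hne, hbin, hnoleaf, hsplit⟩ := hT
  -- splitting nodes have both immediate successors 0 and 1
  have hsplit01 : ∀ t, IsSplitNode T t → t ++ [0] ∈ T ∧ t ++ [1] ∈ T := by
    intro t ht
    obtain ⟨htT, i, j, hij, hi, hj⟩ := ht
    have hi2 : i < 2 := hbin _ hi i (by simp)
    have hj2 : j < 2 := hbin _ hj j (by simp)
    interval_cases i <;> interval_cases j <;> simp_all
  -- the one-step extension
  have hstep : ∀ (ε : Bool) (k : ℕ) (t : {x : List ℕ // IsSplitNode T x}),
      ∃ t' : {x : List ℕ // IsSplitNode T x},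
        t.1 ++ [cond ε 1 0] <+: t'.1 ∧ ∃ a ∈ A k, a <+: t'.1 := by
    rintro ε k ⟨t, ht⟩
    have hchild : t ++ [cond ε 1 0] ∈ T := by
      cases ε
      · exact (hsplit01 t ht).1
      · exact (hsplit01 t ht).2
    obtain ⟨a, haA, hacomp⟩ := (hA k).2.2 _ hchild
    obtain ⟨u, huT, h1u, h2u⟩ : ∃ u, u ∈ T ∧ t ++ [cond ε 1 0] <+: u ∧ a <+: u := by
      rcases hacomp with h | h
      · exact ⟨a, (hA k).1 haA, h, List.prefix_rfl⟩
      · exact ⟨t ++ [cond ε 1 0], hchild, List.prefix_rfl, h⟩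
    obtain ⟨t', ht'pre, ht'split⟩ := hsplit u huT
    exact ⟨⟨t', ht'split⟩, h1u.trans ht'pre, a, haA, h2u.trans ht'pre⟩
  obtain ⟨r0, hr0⟩ := hne
  obtain ⟨root, -, hrootsplit⟩ := hsplit r0 hr0
  -- the fusion map g
  obtain ⟨g, hgsplit, hgrow, hhit⟩ :
      ∃ g : List Bool → List ℕ,
        (∀ s, IsSplitNode T (g s)) ∧
        (∀ ε s, g s ++ [cond ε 1 0] <+: g (ε :: s)) ∧
        (∀ ε s, ∃ a ∈ A s.length, a <+: g (ε :: s)) := by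
    choose F hF1 hF2 using hstep
    refine ⟨fun s => (listRecAux ⟨root, hrootsplit⟩ F s).1,
      fun s => (listRecAux ⟨root, hrootsplit⟩ F s).2, fun ε s => ?_, fun ε s => ?_⟩
    · exact hF1 ε s.length (listRecAux ⟨root, hrootsplit⟩ F s)
    · exact hF2 ε s.length (listRecAux ⟨root, hrootsplit⟩ F s)
  have hmem : ∀ s, g s ∈ T := fun s => (hgsplit s).1
  have hmono : ∀ s u : List Bool, s <:+ u → g s <+: g u := by
    intro s u h
    induction u with
    | nil => rw [List.suffix_nil] at h; subst h; exact List.prefix_rfl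
    | cons ε u ih =>
      rcases List.suffix_cons_iff.1 h with rfl | h'
      · exact List.prefix_rfl
      · exact (ih h').trans ((List.prefix_append _ _).trans (hgrow ε u))
  have hlen : ∀ (ε : Bool) (s : List Bool), (g s).length < (g (ε :: s)).length := by
    intro ε s
    have h := (hgrow ε s).length_le
    simp only [List.length_append, List.length_cons, List.length_nil] at h
    omega
  have hincomp : ∀ s u : List Bool, ¬ s <:+ u → ¬ u <:+ s → ¬ NodeCompat (g s) (g u) := by
    intro s u h1 h2
    obtain ⟨r, x, y, hxy, hxs, hyu⟩ := exists_diff_suffix s u h1 h2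
    have hx := (hgrow x r).trans (hmono _ _ hxs)
    have hy := (hgrow y r).trans (hmono _ _ hyu)
    have hcond : (cond x 1 0 : ℕ) ≠ cond y 1 0 := by
      cases x <;> cases y <;> simp_all
    exact incompat_of_diff hcond hx hy
  -- the new tree
  have hT'sub : {t | ∃ s : List Bool, t <+: g s} ⊆ T := by
    rintro t ⟨s, hs⟩; exact htree _ (hmem s) t hs
  have hT'tree : IsTreeN {t | ∃ s : List Bool, t <+: g s} := by
    rintro p ⟨u, hu⟩ t ht; exact ⟨u, ht.trans hu⟩
  have hgT' : ∀ s : List Bool, g s ∈ {t | ∃ s : List Bool, t <+: g s} :=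
    fun s => ⟨s, List.prefix_rfl⟩
  have hnoleaf' : ∀ t ∈ {t | ∃ s : List Bool, t <+: g s},
      ∃ k, t ++ [k] ∈ {t | ∃ s : List Bool, t <+: g s} := by
    rintro t ⟨s, hs⟩
    have hpre : t <+: g (true :: s) :=
      hs.trans ((List.prefix_append _ _).trans (hgrow true s))
    have hlt : t.length < (g (true :: s)).length := lt_of_le_of_lt hs.length_le (hlen true s)
    obtain ⟨k, hk⟩ := exists_append_prefix hpre hlt
    exact ⟨k, true :: s, hk⟩
  have hsplit' : ∀ t ∈ {t | ∃ s : List Bool, t <+: g s},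
      ∃ t', t <+: t' ∧ IsSplitNode {t | ∃ s : List Bool, t <+: g s} t' := by
    rintro t ⟨s, hs⟩
    refine ⟨g s, hs, hgT' s, 0, 1, by norm_num, ⟨false :: s, hgrow false s⟩,
      ⟨true :: s, hgrow true s⟩⟩
  refine ⟨{t | ∃ s : List Bool, t <+: g s}, hT'sub,
    ⟨hT'tree, ⟨g [], hgT' []⟩, fun s hs k hk => hbin s (hT'sub hs) k hk,
      hnoleaf', hsplit'⟩, ?_⟩
  -- fronts
  intro i
  refine ⟨Set.inter_subset_right, ((hA i).2.1).mono Set.inter_subset_left, ?_⟩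
  intro b hb
  obtain ⟨hbsub, hbpair, hbmax⟩ := hb
  -- anything in T' compatible with all of b lies in b
  have hbins : ∀ w ∈ {t | ∃ s : List Bool, t <+: g s},
      (∀ u ∈ b, NodeCompat u w) → w ∈ b := by
    intro w hw hcomp
    have hmax := hbmax (insert w b) (Set.subset_insert _ _)
      (Set.insert_subset hw hbsub)
      (Set.pairwise_insert.2
        ⟨hbpair, fun u hu _ => ⟨(hcomp u hu).symm, hcomp u hu⟩⟩)
    rw [← hmax]; exact Set.mem_insert _ _
  -- b is downward closed
  have hdown : ∀ t ∈ b, ∀ t', t' <+: t → t' ∈ b := by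
    intro t ht t' hpre
    apply hbins t' (hT'tree t (hbsub ht) t' hpre)
    intro u hu
    by_cases hut : u = t
    · subst hut; exact Or.inr hpre
    · rcases hbpair hu ht hut with h | h
      · exact compat_of_prefix h hpre
      · exact Or.inr (hpre.trans h)
  have hroot_b : g [] ∈ b := by
    apply hbins _ (hgT' [])
    intro u hu
    obtain ⟨s, hs⟩ := hbsub hu
    exact compat_of_prefix hs (hmono [] s (List.nil_suffix))
  -- b has elements of unbounded length
  have hunbdd : ∀ L : ℕ, ∃ p ∈ b, L < p.length := by
    intro L
    by_contra hcon
    push_neg at hcon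
    have hSne : (List.length '' b).Nonempty := ⟨_, Set.mem_image_of_mem _ hroot_b⟩
    have hSbdd : BddAbove (List.length '' b) := by
      refine ⟨L, ?_⟩
      rintro n ⟨p, hp, rfl⟩
      exact hcon p hp
    obtain ⟨t, htb, htlen⟩ := Nat.sSup_mem hSne hSbdd
    obtain ⟨k, hk⟩ := hnoleaf' t (hbsub htb)
    have htkb : t ++ [k] ∈ b := by
      apply hbins _ hk
      intro u hu
      have hule : u.length ≤ t.length := by
        rw [htlen]; exact le_csSup hSbdd ⟨u, hu, rfl⟩
      by_cases hut : u = t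
      · subst hut; exact Or.inl (List.prefix_append _ _)
      · rcases hbpair hu htb hut with h | h
        · exact Or.inl (h.trans (List.prefix_append t [k]))
        · exact absurd (h.eq_of_length (le_antisymm h.length_le hule)).symm hut
    have hle : (t ++ [k]).length ≤ t.length := by
      rw [htlen]; exact le_csSup hSbdd ⟨_, htkb, rfl⟩
    simp at hle
  -- b contains g-values of every level
  have hlevel : ∀ n : ℕ, ∃ s : List Bool, s.length = n ∧ g s ∈ b := by
    intro n; induction n with
    | zero => exact ⟨[], rfl, hroot_b⟩
    | succ n ih =>
      obtain ⟨s, hslen, hsb⟩ := ih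
      obtain ⟨p, hpb, hplen⟩ :=
        hunbdd (max (g (false :: s)).length (g (true :: s)).length)
      obtain ⟨u, hpu⟩ := hbsub hpb
      have hgs0 : (g s).length < (g (false :: s)).length := hlen false s
      have hgslen : (g s).length < p.length :=
        lt_of_le_of_lt (le_of_lt (lt_of_lt_of_le hgs0 (le_max_left _ _))) hplen
      have hgsp : g s <+: p := by
        by_cases h : p = g s
        · subst h; exact List.prefix_rfl
        · rcases hbpair hpb hsb h with h' | h'
          · exact absurd h'.length_le (by omega)
          · exact h'
      have hgsu : g s <+: g u := hgsp.trans hpu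
      have hplenu : p.length ≤ (g u).length := hpu.length_le
      have hsuffix : s <:+ u := by
        by_contra hns
        by_cases h2 : u <:+ s
        · have h3 := (hmono u s h2).length_le
          omega
        · exact hincomp s u hns h2 (Or.inl hgsu)
      have hne_su : s ≠ u := by
        rintro rfl; omega
      obtain ⟨ε, hεu⟩ := suffix_cons_of_ne hsuffix hne_su
      have hεlen : (g (ε :: s)).length ≤ p.length := by
        refine le_of_lt (lt_of_le_of_lt ?_ hplen)
        cases ε
        · exact le_max_left _ _
        · exact le_max_right _ _
      have hεp : g (ε :: s) <+: p :=
        List.prefix_of_prefix_length_le (hmono _ _ hεu) hpu hεlen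
      refine ⟨ε :: s, by simp [hslen], hbins _ (hgT' _) ?_⟩
      intro v hv
      by_cases hvp : v = p
      · subst hvp; exact Or.inr hεp
      · rcases hbpair hv hpb hvp with h | h
        · exact compat_of_prefix h hεp
        · exact Or.inr (hεp.trans h)
  obtain ⟨s, hslen, hsb⟩ := hlevel (i + 1)
  cases s with
  | nil => simp at hslen
  | cons ε s' =>
    have hs'len : s'.length = i := by simpa using hslen
    obtain ⟨a, haA, hapre⟩ := hhit ε s'
    rw [hs'len] at haA
    exact ⟨a, ⟨haA, hT'tree _ (hgT' _) a hapre⟩, hdown _ hsb a hapre⟩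
end

section
/- Assume CH (2^{ℵ₀} = ℵ₁). Then the poset P satisfies the ℵ₂-chain condition: every antichain of P (a set of conditions that are pairwise incompatible, i.e., pairwise have no common lower bound in P) has cardinality at most ℵ₁. -/
/-- The stem of a tree: its first (minimal) splitting node. -/
def IsStem (T : Set (List ℕ)) (s : List ℕ) : Prop :=
  IsSplitNode T s ∧ ∀ t : List ℕ, IsSplitNode T t → t <+: s → t = s

/-- The parameters `f_{n,l}` (`−1 ≤ l < 2^n`, encoded with the shift `f n (l+1) = f_{n,l}`,
so `f n 0 = f_{n,−1}`) and `g_{n,l}` (`0 ≤ l < 2^n`), with the growth conditions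
`g_{n,l} > 2·(f_{n,l−1})^{n·fmax(n−1)^n}` and `f_{n,l} > (g_{n,l})^{n+1}`,
where `fmax m = f_{m,2^m−1}`. -/
structure GrowthPair where
  g : ℕ → ℕ → ℕ
  f : ℕ → ℕ → ℕ
  f_zero : f 0 0 = 0
  f_succ : ∀ n : ℕ, f (n + 1) 0 = f n (2 ^ n)
  g_big : ∀ n l : ℕ, l < 2 ^ n → g n l > 2 * f n l ^ (n * f (n - 1) (2 ^ (n - 1)) ^ n)
  f_big : ∀ n l : ℕ, l < 2 ^ n → f n (l + 1) > g n l ^ (n + 1)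

/-- The lexicographic rank of a binary sequence `s ∈ 2^n` in `[0, 2^n)`. -/
def lexRank (s : List ℕ) : ℕ := s.foldl (fun a b => 2 * a + b) 0

/-- `f_s` for `s ∈ 2^n`. -/
def GrowthPair.fOf (G : GrowthPair) (s : List ℕ) : ℕ := G.f s.length (lexRank s + 1)

/-- `g_s` for `s ∈ 2^n`. -/
def GrowthPair.gOf (G : GrowthPair) (s : List ℕ) : ℕ := G.g s.length (lexRank s)

/-- The set of immediate successors of `t` in `T`. -/
def succSet (T : Set (List ℕ)) (t : List ℕ) : Set ℕ := {k | t ++ [k] ∈ T}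

/-- The norm `μ_{s↾m}(A)` of the set `A` of immediate `T`-successors of a node `t` of
height `m`, i.e. `log_{g_{s↾m}} |A|`. -/
noncomputable def splitNorm (G : GrowthPair) (s t : List ℕ) (T : Set (List ℕ)) : ℝ :=
  Real.logb (G.gOf (s.take t.length)) ((succSet T t).ncard)

/-- `t` is an `l`-large splitting node of the `s`-tree `T`. -/
def IsLargeSplit (G : GrowthPair) (s : List ℕ) (T : Set (List ℕ)) (l : ℕ) (t : List ℕ) : Prop :=
  t ∈ T ∧ (l : ℝ) ≤ splitNorm G s t T

/-- The `s`-tree `T` has `l`-large splitting: its `l`-large splitting nodes form a front. -/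
def HasLargeSplitting (G : GrowthPair) (s : List ℕ) (T : Set (List ℕ)) (l : ℕ) : Prop :=
  IsFront T {t : List ℕ | IsLargeSplit G s T l t}

/-- An `s`-tree for `s ∈ 2^n`: a (nonempty) tree `T ⊆ ω^{≤n+1}` all of whose branches have
length `n+1`, with `t(m) < f_{s↾m}` for all `m ≤ n` and `t ∈ T ∩ ω^{m+1}`. -/
def IsSTree (G : GrowthPair) (s : List ℕ) (T : Set (List ℕ)) : Prop :=
  IsTreeN T ∧ T.Nonempty ∧
    (∀ t ∈ T, t.length ≤ s.length + 1) ∧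
    (∀ t ∈ T, t.length ≤ s.length → ∃ k : ℕ, t ++ [k] ∈ T) ∧
    (∀ t ∈ T, ∀ (m : ℕ) (hm : m < t.length), t.get ⟨m, hm⟩ < G.fOf (s.take m))

/-- The index set `I = μ ∪ ⋃_{ε<μ} I_ε`, abstractly: an ambient type `ι` (playing the
role of `I`), the subset `Root` (playing the role of `μ`), and the map `ε(·) = idx`
(so that `I_ε = {α ∉ Root | idx α = ε}`). -/
structure IdxCtx (ι : Type) where
  Root : Set ι
  idx : ι → ι
  idx_mem : ∀ α : ι, idx α ∈ Root
  idx_root : ∀ ε ∈ Root, idx ε = ε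

/-- The set `I_ε`. -/
def IdxCtx.block {ι : Type} (C : IdxCtx ι) (ε : ι) : Set ι :=
  {α : ι | α ∉ C.Root ∧ C.idx α = ε}

/-- (Raw data of) a condition: a domain, a Sacks condition `sacks ε` for `ε ∈ dom ∩ Root`,
and an `s`-tree `tr α s` for `α ∈ dom ∖ Root` and `s ∈ sacks (idx α)`; all components are
normalized to `∅` outside their intended domain. -/
structure Cond (ι : Type) where
  dom : Set ι
  sacks : ι → Set (List ℕ)
  tr : ι → List ℕ → Set (List ℕ)

/-- Membership in the forcing poset `P`. -/
def InP {ι : Type} (G : GrowthPair) (C : IdxCtx ι) (p : Cond ι) : Prop :=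
  p.dom.Countable ∧
  (∀ α ∈ p.dom, C.idx α ∈ p.dom) ∧
  (∀ ε ∈ p.dom, ε ∈ C.Root → IsSacks (p.sacks ε)) ∧
  (∀ ε : ι, ¬ (ε ∈ p.dom ∧ ε ∈ C.Root) → p.sacks ε = ∅) ∧
  (∀ ε₁ ∈ p.dom, ∀ ε₂ ∈ p.dom, ε₁ ∈ C.Root → ε₂ ∈ C.Root → ε₁ ≠ ε₂ →
    ∀ s t : List ℕ, IsStem (p.sacks ε₁) s → IsStem (p.sacks ε₂) t → ¬ NodeCompat s t) ∧
  (∀ α ∈ p.dom, α ∉ C.Root →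
    (∀ s ∈ p.sacks (C.idx α), IsSTree G s (p.tr α s)) ∧
    (∀ s ∈ p.sacks (C.idx α), ∀ t ∈ p.sacks (C.idx α), s <+: t →
      p.tr α s = p.tr α t ∩ {u : List ℕ | u.length ≤ s.length + 1}) ∧
    (∀ l : ℕ, ∀ s ∈ p.sacks (C.idx α), ∃ s' ∈ p.sacks (C.idx α), s <+: s' ∧
      HasLargeSplitting G s' (p.tr α s') l)) ∧
  (∀ (α : ι) (s : List ℕ), ¬ (α ∈ p.dom ∧ α ∉ C.Root ∧ s ∈ p.sacks (C.idx α)) →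
    p.tr α s = ∅)

/-- The order on `P`: `q ≤ p`. -/
def CondLE {ι : Type} (C : IdxCtx ι) (q p : Cond ι) : Prop :=
  p.dom ⊆ q.dom ∧
  (∀ ε ∈ p.dom, ε ∈ C.Root → q.sacks ε ⊆ p.sacks ε) ∧
  (∀ α ∈ p.dom, α ∉ C.Root → ∀ s ∈ q.sacks (C.idx α), q.tr α s ⊆ p.tr α s)

/-- `pos(p, ≤n)`: families `a = (a(α))_{α ∈ dom p}` (normalized to `[]` off `dom p`)
with `a(α) ∈ ω^{n+1}`, `a(ε) ∈ p(ε)` for `ε ∈ dom p ∩ Root`, and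
`a(α) ∈ p(α, a(idx α))` for `α ∈ dom p ∖ Root`. -/
def Pos {ι : Type} (C : IdxCtx ι) (p : Cond ι) (n : ℕ) : Set (ι → List ℕ) :=
  {a : ι → List ℕ |
    (∀ α ∈ p.dom, (a α).length = n + 1) ∧
    (∀ ε ∈ p.dom, ε ∈ C.Root → a ε ∈ p.sacks ε) ∧
    (∀ α ∈ p.dom, α ∉ C.Root → a α ∈ p.tr α (a (C.idx α))) ∧
    (∀ α : ι, α ∉ p.dom → a α = ([] : List ℕ))}

/-- `p` is finitary: `pos(p, ≤n)` is finite for every `n`. -/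
def Finitary {ι : Type} (C : IdxCtx ι) (p : Cond ι) : Prop :=
  ∀ n : ℕ, (Pos C p n).Finite

/-- `p` is uniform: for every `α ∈ dom p ∖ Root` and `l` there is `h` such that
`p(α,s)` has `l`-large splitting for all `s ∈ p(idx α) ∩ 2^h`. -/
def Uniform {ι : Type} (G : GrowthPair) (C : IdxCtx ι) (p : Cond ι) : Prop :=
  ∀ α ∈ p.dom, α ∉ C.Root → ∀ l : ℕ, ∃ h : ℕ,
    ∀ s ∈ p.sacks (C.idx α), s.length = h → HasLargeSplitting G s (p.tr α s) l

/-- For `q ≤ p`: `pos(p,≤n) ≡ pos(q,≤n)`, i.e. every `a ∈ pos(p,≤n)` has exactly one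
`b ∈ pos(q,≤n)` with `b ↾ dom p = a`. -/
def PosEquiv {ι : Type} (C : IdxCtx ι) (p q : Cond ι) (n : ℕ) : Prop :=
  ∀ a ∈ Pos C p n, ∃! b : ι → List ℕ, b ∈ Pos C q n ∧ ∀ α ∈ p.dom, b α = a α

namespace Stmt8

theorem nodeCompat_refl (s : List ℕ) : NodeCompat s s := Or.inl (List.prefix_refl s)

theorem nodeCompat_symm {s t : List ℕ} (h : NodeCompat s t) : NodeCompat t s := h.symm

theorem nodeCompat_of_prefixes {a b c : List ℕ} (h1 : a <+: c) (h2 : b <+: c) :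
    NodeCompat a b := List.prefix_or_prefix_of_prefix h1 h2

theorem not_compat_ext {a b x y : List ℕ} (h : ¬ NodeCompat a b) (ha : a <+: x) (hb : b <+: y) :
    ¬ NodeCompat x y := by
  rintro (hxy | hyx)
  · exact h (nodeCompat_of_prefixes (ha.trans hxy) hb)
  · exact h (nodeCompat_of_prefixes ha (hb.trans hyx))

theorem not_compat_snoc {w : List ℕ} {a b : ℕ} (h : a ≠ b) :
    ¬ NodeCompat (w ++ [a]) (w ++ [b]) := by
  rintro (hc | hc) <;>
  · have := hc.eq_of_length (by simp)
    simp only [List.append_cancel_left_eq, List.cons.injEq] at this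
    first
      | exact h this.1
      | exact h this.1.symm

/-- incomparable nodes have a common splitting prefix -/
theorem exists_commonSplit : ∀ (s t : List ℕ), ¬ NodeCompat s t →
    ∃ w a b, a ≠ b ∧ w ++ [a] <+: s ∧ w ++ [b] <+: t := by
  intro s
  induction s with
  | nil => intro t h; exact absurd (Or.inl (List.nil_prefix)) h
  | cons x s' ih =>
    intro t h
    match t with
    | [] => exact absurd (Or.inr (List.nil_prefix)) h
    | y :: t' =>
      by_cases hxy : x = y
      · subst hxy
        have h' : ¬ NodeCompat s' t' := by
          rintro (hc | hc)
          · exact h (Or.inl (List.cons_prefix_cons.2 ⟨rfl, hc⟩))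
          · exact h (Or.inr (List.cons_prefix_cons.2 ⟨rfl, hc⟩))
        obtain ⟨w, a, b, hab, h1, h2⟩ := ih t' h'
        exact ⟨x :: w, a, b, hab, List.cons_prefix_cons.2 ⟨rfl, h1⟩,
          List.cons_prefix_cons.2 ⟨rfl, h2⟩⟩
      · refine ⟨[], x, y, hxy, ?_, ?_⟩ <;> simp [List.cons_prefix_cons]

theorem nil_mem_of_tree {T : Set (List ℕ)} (hT : IsTreeN T) (hne : T.Nonempty) : [] ∈ T := by
  obtain ⟨s, hs⟩ := hne
  exact hT s hs [] (List.nil_prefix)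

theorem stem_exists {T : Set (List ℕ)} (hT : IsSacks T) : ∃ s, IsStem T s := by
  obtain ⟨htree, hne, _, _, hsplit⟩ := hT
  have h0 : ∃ n, ∃ s : List ℕ, s.length = n ∧ IsSplitNode T s := by
    obtain ⟨t, _, ht⟩ := hsplit [] (nil_mem_of_tree htree hne)
    exact ⟨t.length, t, rfl, ht⟩
  classical
  obtain ⟨s, hlen, hs⟩ := Nat.find_spec h0
  refine ⟨s, hs, fun t ht htp => ?_⟩
  have hmin : Nat.find h0 ≤ t.length := Nat.find_min' h0 ⟨t, rfl, ht⟩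
  have : t.length = s.length := le_antisymm htp.length_le (by omega)
  exact htp.eq_of_length this

theorem stem_unique {T : Set (List ℕ)} (hT : IsTreeN T) {s t : List ℕ}
    (hs : IsStem T s) (ht : IsStem T t) : s = t := by
  by_cases hc : NodeCompat s t
  · rcases hc with h | h
    · exact ht.2 s hs.1 h
    · exact (hs.2 t ht.1 h).symm
  · obtain ⟨w, a, b, hab, h1, h2⟩ := exists_commonSplit s t hc
    have hwa : w ++ [a] ∈ T := hT s hs.1.1 _ h1
    have hwb : w ++ [b] ∈ T := hT t ht.1.1 _ h2
    have hw : IsSplitNode T w := ⟨hT _ hwa w (by simp), a, b, hab, hwa, hwb⟩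
    have hwp : w <+: s := (List.prefix_append w [a]).trans h1
    have hws := hs.2 w hw hwp
    subst hws
    exact absurd h1.length_le (by simp)

open Classical in
noncomputable def stemOf (T : Set (List ℕ)) : List ℕ :=
  if h : ∃ s, IsStem T s then h.choose else []

theorem stemOf_spec {T : Set (List ℕ)} (hT : IsSacks T) : IsStem T (stemOf T) := by
  classical
  rw [stemOf]
  rw [dif_pos (stem_exists hT)]
  exact (stem_exists hT).choose_spec

theorem isStem_iff {T : Set (List ℕ)} (hT : IsSacks T) {s : List ℕ} :
    IsStem T s ↔ s = stemOf T :=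
  ⟨fun h => stem_unique hT.1 h (stemOf_spec hT), fun h => h ▸ stemOf_spec hT⟩

theorem stem_succs {T : Set (List ℕ)} (hT : IsSacks T) {s : List ℕ} (hs : IsStem T s) :
    s ++ [0] ∈ T ∧ s ++ [1] ∈ T := by
  obtain ⟨hsT, i, j, hij, hi, hj⟩ := hs.1
  have h2 := hT.2.2.1
  have hi2 : i < 2 := h2 _ hi i (by simp)
  have hj2 : j < 2 := h2 _ hj j (by simp)
  interval_cases i <;> interval_cases j <;> first | exact absurd rfl hij | exact ⟨hi, hj⟩ | exact ⟨hj, hi⟩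

/-- The cone of `T` above `u`. -/
def Cone (T : Set (List ℕ)) (u : List ℕ) : Set (List ℕ) := {t ∈ T | NodeCompat t u}

theorem cone_subset (T : Set (List ℕ)) (u : List ℕ) : Cone T u ⊆ T := fun _ h => h.1

theorem prefix_of_compat_of_le {t u : List ℕ} (h : NodeCompat t u) (hl : t.length ≤ u.length) :
    t <+: u := by
  rcases h with h | h
  · exact h
  · have he : u = t := h.eq_of_length (le_antisymm h.length_le hl)
    subst he
    exact List.prefix_rfl

theorem cone_isSacks {T : Set (List ℕ)} (hT : IsSacks T) {u : List ℕ} (hu : u ∈ T) :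
    IsSacks (Cone T u) := by
  obtain ⟨htree, _, h2, hsucc, hsplit⟩ := hT
  refine ⟨?_, ⟨u, hu, nodeCompat_refl u⟩, fun s hs => h2 s hs.1, ?_, ?_⟩
  · rintro s ⟨hsT, hsu⟩ t htp
    refine ⟨htree s hsT t htp, ?_⟩
    rcases hsu with h | h
    · exact Or.inl (htp.trans h)
    · exact nodeCompat_of_prefixes htp h
  · rintro t ⟨htT, htu⟩
    by_cases hl : t.length < u.length
    · have htp : t <+: u := prefix_of_compat_of_le htu (le_of_lt hl)
      obtain ⟨d, hd⟩ := htp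
      cases d with
      | nil =>
        exfalso
        rw [List.append_nil] at hd
        subst hd
        exact lt_irrefl _ hl
      | cons c d' =>
        refine ⟨c, htree u hu _ ?_, Or.inl ?_⟩ <;>
        · rw [← hd]
          exact ⟨d', by simp⟩
    · push_neg at hl
      have hut : u <+: t := prefix_of_compat_of_le (nodeCompat_symm htu) hl
      obtain ⟨k, hk⟩ := hsucc t htT
      exact ⟨k, hk, Or.inr (hut.trans ⟨[k], rfl⟩)⟩
  · rintro t ⟨htT, htu⟩
    have hmain : ∀ t' ∈ T, t <+: t' → u <+: t' →
        ∃ w, t <+: w ∧ IsSplitNode (Cone T u) w := by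
      intro t' ht' htt' hut'
      obtain ⟨w, hw1, hw2, i, j, hij, hi, hj⟩ := hsplit t' ht'
      have huw : u <+: w := hut'.trans hw1
      refine ⟨w, htt'.trans hw1, ⟨hw2, Or.inr huw⟩, i, j, hij, ⟨hi, Or.inr (huw.trans ⟨[i], rfl⟩)⟩,
        ⟨hj, Or.inr (huw.trans ⟨[j], rfl⟩)⟩⟩
    by_cases hl : t.length ≤ u.length
    · have htp : t <+: u := prefix_of_compat_of_le htu hl
      obtain ⟨w, h1, h2⟩ := hmain u hu htp (List.prefix_refl u)
      exact ⟨w, h1, h2⟩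
    · have hut : u <+: t := prefix_of_compat_of_le (nodeCompat_symm htu) (by omega)
      obtain ⟨w, h1, h2⟩ := hmain t htT (List.prefix_refl t) hut
      exact ⟨w, h1, h2⟩

theorem cone_split_extends {T : Set (List ℕ)} {u s : List ℕ}
    (hs : IsSplitNode (Cone T u) s) : u <+: s := by
  obtain ⟨⟨hsT, hsu⟩, i, j, hij, hi, hj⟩ := hs
  by_cases hl : u.length ≤ s.length
  · exact prefix_of_compat_of_le (nodeCompat_symm hsu) hl
  · exfalso
    have hi' : s ++ [i] <+: u := prefix_of_compat_of_le hi.2 (by simp; omega)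
    have hj' : s ++ [j] <+: u := prefix_of_compat_of_le hj.2 (by simp; omega)
    have := (List.prefix_of_prefix_length_le hi' hj' (by simp)).eq_of_length (by simp)
    simp only [List.append_cancel_left_eq, List.cons.injEq] at this
    exact hij this.1

theorem cone_stem_extends {T : Set (List ℕ)} {u s : List ℕ}
    (hs : IsStem (Cone T u) s) : u <+: s := cone_split_extends hs.1

theorem mem_cone_self {T : Set (List ℕ)} {u : List ℕ} (hu : u ∈ T) : u ∈ Cone T u :=
  ⟨hu, nodeCompat_refl u⟩

end Stmt8

namespace Stmt8
variable {ι : Type}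

/-- The set of stems of a condition. -/
def StemSet (C : IdxCtx ι) (p : Cond ι) : Set (List ℕ) :=
  {s | ∃ ε ∈ p.dom, ε ∈ C.Root ∧ IsStem (p.sacks ε) s}

open Classical in
noncomputable def AmalgSacks (C : IdxCtx ι) (p q : Cond ι) : ι → Set (List ℕ) := fun ε =>
  if ε ∈ C.Root then
    (if ε ∈ p.dom then
      (if ε ∈ q.dom then p.sacks ε
       else Cone (p.sacks ε) (stemOf (p.sacks ε) ++ [0]))
     else if ε ∈ q.dom then Cone (q.sacks ε) (stemOf (q.sacks ε) ++ [1])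
     else ∅)
  else ∅

open Classical in
noncomputable def AmalgTr (C : IdxCtx ι) (p q : Cond ι) : ι → List ℕ → Set (List ℕ) :=
  fun α s =>
    if α ∉ C.Root ∧ (α ∈ p.dom ∨ α ∈ q.dom) ∧ s ∈ AmalgSacks C p q (C.idx α) then
      (if α ∈ p.dom then p.tr α s else q.tr α s)
    else ∅

noncomputable def Amalg (C : IdxCtx ι) (p q : Cond ι) : Cond ι :=
  ⟨p.dom ∪ q.dom, AmalgSacks C p q, AmalgTr C p q⟩

section AmalgLemmas
variable (C : IdxCtx ι) (p q : Cond ι) {ε α : ι} {s : List ℕ}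

theorem AmalgSacks_D (hR : ε ∈ C.Root) (h1 : ε ∈ p.dom) (h2 : ε ∈ q.dom) :
    AmalgSacks C p q ε = p.sacks ε := by simp [AmalgSacks, hR, h1, h2]

theorem AmalgSacks_P (hR : ε ∈ C.Root) (h1 : ε ∈ p.dom) (h2 : ε ∉ q.dom) :
    AmalgSacks C p q ε = Cone (p.sacks ε) (stemOf (p.sacks ε) ++ [0]) := by
  simp [AmalgSacks, hR, h1, h2]

theorem AmalgSacks_Q (hR : ε ∈ C.Root) (h1 : ε ∉ p.dom) (h2 : ε ∈ q.dom) :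
    AmalgSacks C p q ε = Cone (q.sacks ε) (stemOf (q.sacks ε) ++ [1]) := by
  simp [AmalgSacks, hR, h1, h2]

theorem AmalgSacks_nR (hR : ε ∉ C.Root) : AmalgSacks C p q ε = ∅ := by
  simp [AmalgSacks, hR]

theorem AmalgSacks_nd (h1 : ε ∉ p.dom) (h2 : ε ∉ q.dom) : AmalgSacks C p q ε = ∅ := by
  simp [AmalgSacks, h1, h2]

theorem AmalgTr_P (hR : α ∉ C.Root) (h1 : α ∈ p.dom)
    (hs : s ∈ AmalgSacks C p q (C.idx α)) : AmalgTr C p q α s = p.tr α s := by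
  simp [AmalgTr, hR, h1, hs]

theorem AmalgTr_Q (hR : α ∉ C.Root) (h1 : α ∉ p.dom) (h2 : α ∈ q.dom)
    (hs : s ∈ AmalgSacks C p q (C.idx α)) : AmalgTr C p q α s = q.tr α s := by
  simp [AmalgTr, hR, h1, h2, hs]

end AmalgLemmas

/-- The cone preserves the "large splitting somewhere above" property. -/
theorem cone_above {T : Set (List ℕ)} {u : List ℕ} {P : List ℕ → Prop}
    (hu : u ∈ T)
    (h : ∀ s ∈ T, ∃ s' ∈ T, s <+: s' ∧ P s') :
    ∀ s ∈ Cone T u, ∃ s' ∈ Cone T u, s <+: s' ∧ P s' := by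
  rintro s ⟨hsT, hsu⟩
  by_cases hl : u.length ≤ s.length
  · have hus : u <+: s := prefix_of_compat_of_le (nodeCompat_symm hsu) hl
    obtain ⟨s', hs'T, hss', hP⟩ := h s hsT
    exact ⟨s', ⟨hs'T, Or.inr (hus.trans hss')⟩, hss', hP⟩
  · have hsu' : s <+: u := prefix_of_compat_of_le hsu (by omega)
    obtain ⟨s', hs'T, hss', hP⟩ := h u hu
    exact ⟨s', ⟨hs'T, Or.inr hss'⟩, hsu'.trans hss', hP⟩

theorem amalg_spec {G : GrowthPair} {C : IdxCtx ι} {p q : Cond ι}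
    (hp : InP G C p) (hq : InP G C q)
    (H1 : ∀ ε, ε ∈ p.dom → ε ∈ q.dom → p.sacks ε = q.sacks ε)
    (H2 : ∀ α, α ∈ p.dom → α ∈ q.dom → p.tr α = q.tr α)
    (H3 : StemSet C p = StemSet C q) :
    InP G C (Amalg C p q) ∧ CondLE C (Amalg C p q) p ∧ CondLE C (Amalg C p q) q := by
  obtain ⟨hp1, hp2, hp3, hp4, hp5, hp6, hp7⟩ := hp
  obtain ⟨hq1, hq2, hq3, hq4, hq5, hq6, hq7⟩ := hq
  classical
  set r := Amalg C p q with hr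
  have hrdom : r.dom = p.dom ∪ q.dom := rfl
  have hrs : r.sacks = AmalgSacks C p q := rfl
  have hrt : r.tr = AmalgTr C p q := rfl
  have hsubp : ∀ ε ∈ p.dom, ε ∈ C.Root → r.sacks ε ⊆ p.sacks ε := by
    intro ε h1 hR
    by_cases h2 : ε ∈ q.dom
    · rw [hrs, AmalgSacks_D C p q hR h1 h2]
    · rw [hrs, AmalgSacks_P C p q hR h1 h2]; exact cone_subset _ _
  have hsubq : ∀ ε ∈ q.dom, ε ∈ C.Root → r.sacks ε ⊆ q.sacks ε := by
    intro ε h2 hR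
    by_cases h1 : ε ∈ p.dom
    · rw [hrs, AmalgSacks_D C p q hR h1 h2, H1 ε h1 h2]
    · rw [hrs, AmalgSacks_Q C p q hR h1 h2]; exact cone_subset _ _
  have huP : ∀ ε ∈ p.dom, ε ∈ C.Root → stemOf (p.sacks ε) ++ [0] ∈ p.sacks ε :=
    fun ε h hR => (stem_succs (hp3 ε h hR) (stemOf_spec (hp3 ε h hR))).1
  have huQ : ∀ ε ∈ q.dom, ε ∈ C.Root → stemOf (q.sacks ε) ++ [1] ∈ q.sacks ε :=
    fun ε h hR => (stem_succs (hq3 ε h hR) (stemOf_spec (hq3 ε h hR))).2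
  -- the tr values
  have htrP : ∀ α ∈ p.dom, α ∉ C.Root → ∀ s ∈ r.sacks (C.idx α), r.tr α s = p.tr α s := by
    intro α hα hnR s hs
    exact AmalgTr_P C p q hnR hα hs
  have htrQ : ∀ α, α ∉ p.dom → α ∈ q.dom → α ∉ C.Root →
      ∀ s ∈ r.sacks (C.idx α), r.tr α s = q.tr α s := by
    intro α hnp hα hnR s hs
    exact AmalgTr_Q C p q hnR hnp hα hs
  refine ⟨⟨hp1.union hq1, ?_, ?_, ?_, ?_, ?_, ?_⟩, ?_, ?_⟩
  · -- closure under idx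
    rintro α (hα | hα)
    · exact Or.inl (hp2 α hα)
    · exact Or.inr (hq2 α hα)
  · -- Sacks conditions
    intro ε hε hR
    rcases hε with h1 | h2
    · by_cases h2 : ε ∈ q.dom
      · rw [hrs, AmalgSacks_D C p q hR h1 h2]; exact hp3 ε h1 hR
      · rw [hrs, AmalgSacks_P C p q hR h1 h2]
        exact cone_isSacks (hp3 ε h1 hR) (huP ε h1 hR)
    · by_cases h1 : ε ∈ p.dom
      · rw [hrs, AmalgSacks_D C p q hR h1 h2]; exact hp3 ε h1 hR
      · rw [hrs, AmalgSacks_Q C p q hR h1 h2]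
        exact cone_isSacks (hq3 ε h2 hR) (huQ ε h2 hR)
  · -- normalization of sacks
    intro ε hε
    by_cases hR : ε ∈ C.Root
    · have hεd : ε ∉ p.dom ∪ q.dom := fun hd => hε ⟨hd, hR⟩
      rw [hrs, AmalgSacks_nd C p q (fun h => hεd (Or.inl h)) (fun h => hεd (Or.inr h))]
    · rw [hrs, AmalgSacks_nR C p q hR]
  · -- stems pairwise incomparable
    intro ε₁ hε₁ ε₂ hε₂ hR1 hR2 hne v₁ v₂ hv₁ hv₂
    -- extract anchor information for a coordinate
    have key : ∀ ε, ε ∈ p.dom ∪ q.dom → ε ∈ C.Root → ∀ v, IsStem (r.sacks ε) v →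
        (ε ∈ p.dom ∧ ε ∈ q.dom ∧ IsStem (p.sacks ε) v) ∨
        (ε ∈ p.dom ∧ ε ∉ q.dom ∧ stemOf (p.sacks ε) ++ [0] <+: v) ∨
        (ε ∉ p.dom ∧ ε ∈ q.dom ∧ stemOf (q.sacks ε) ++ [1] <+: v) := by
      intro ε hε hR v hv
      by_cases h1 : ε ∈ p.dom
      · by_cases h2 : ε ∈ q.dom
        · rw [hrs, AmalgSacks_D C p q hR h1 h2] at hv
          exact Or.inl ⟨h1, h2, hv⟩
        · rw [hrs, AmalgSacks_P C p q hR h1 h2] at hv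
          exact Or.inr (Or.inl ⟨h1, h2, cone_stem_extends hv⟩)
      · have h2 : ε ∈ q.dom := hε.resolve_left h1
        rw [hrs, AmalgSacks_Q C p q hR h1 h2] at hv
        exact Or.inr (Or.inr ⟨h1, h2, cone_stem_extends hv⟩)
    have k1 := key ε₁ hε₁ hR1 v₁ hv₁
    have k2 := key ε₂ hε₂ hR2 v₂ hv₂
    -- helper for the mixed case
    have mixed : ∀ εp εq vp vq, εp ∈ p.dom → εp ∉ q.dom → εq ∉ p.dom → εq ∈ q.dom →
        εp ∈ C.Root → εq ∈ C.Root →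
        stemOf (p.sacks εp) ++ [0] <+: vp → stemOf (q.sacks εq) ++ [1] <+: vq →
        ¬ NodeCompat vp vq := by
      intro εp εq vp vq h1p h1q h2p h2q hRp hRq hpre1 hpre2
      have hstP : IsStem (p.sacks εp) (stemOf (p.sacks εp)) := stemOf_spec (hp3 εp h1p hRp)
      have hmem : stemOf (p.sacks εp) ∈ StemSet C q := by
        rw [← H3]; exact ⟨εp, h1p, hRp, hstP⟩
      obtain ⟨ε', hε'q, hε'R, hstem'⟩ := hmem
      by_cases hee : ε' = εq
      · subst hee
        have heq : stemOf (p.sacks εp) = stemOf (q.sacks ε') :=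
          stem_unique (hq3 ε' hε'q hε'R).1 hstem' (stemOf_spec (hq3 ε' hε'q hε'R))
        rw [heq] at hpre1
        exact not_compat_ext (not_compat_snoc (by norm_num : (0:ℕ) ≠ 1)) hpre1 hpre2
      · have hbase := hq5 ε' hε'q εq h2q hε'R hRq hee (stemOf (p.sacks εp))
          (stemOf (q.sacks εq)) hstem' (stemOf_spec (hq3 εq h2q hRq))
        exact not_compat_ext hbase ((List.prefix_append _ [0]).trans hpre1)
          ((List.prefix_append _ [1]).trans hpre2)
    rcases k1 with ⟨h1p, h1q, hs1⟩ | ⟨h1p, h1q, hs1⟩ | ⟨h1p, h1q, hs1⟩ <;>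
      rcases k2 with ⟨h2p, h2q, hs2⟩ | ⟨h2p, h2q, hs2⟩ | ⟨h2p, h2q, hs2⟩
    · -- D D
      exact hp5 ε₁ h1p ε₂ h2p hR1 hR2 hne v₁ v₂ hs1 hs2
    · -- D P
      have hbase := hp5 ε₁ h1p ε₂ h2p hR1 hR2 hne v₁ (stemOf (p.sacks ε₂)) hs1
        (stemOf_spec (hp3 ε₂ h2p hR2))
      exact not_compat_ext hbase List.prefix_rfl ((List.prefix_append _ [0]).trans hs2)
    · -- D Q
      have hs1' : IsStem (q.sacks ε₁) v₁ := by rw [← H1 ε₁ h1p h1q]; exact hs1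
      have hbase := hq5 ε₁ h1q ε₂ h2q hR1 hR2 hne v₁ (stemOf (q.sacks ε₂)) hs1'
        (stemOf_spec (hq3 ε₂ h2q hR2))
      exact not_compat_ext hbase List.prefix_rfl ((List.prefix_append _ [1]).trans hs2)
    · -- P D
      have hbase := hp5 ε₁ h1p ε₂ h2p hR1 hR2 hne (stemOf (p.sacks ε₁)) v₂
        (stemOf_spec (hp3 ε₁ h1p hR1)) hs2
      exact not_compat_ext hbase ((List.prefix_append _ [0]).trans hs1) List.prefix_rfl
    · -- P P
      have hbase := hp5 ε₁ h1p ε₂ h2p hR1 hR2 hne (stemOf (p.sacks ε₁)) (stemOf (p.sacks ε₂))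
        (stemOf_spec (hp3 ε₁ h1p hR1)) (stemOf_spec (hp3 ε₂ h2p hR2))
      exact not_compat_ext hbase ((List.prefix_append _ [0]).trans hs1)
        ((List.prefix_append _ [0]).trans hs2)
    · -- P Q
      exact mixed ε₁ ε₂ v₁ v₂ h1p h1q h2p h2q hR1 hR2 hs1 hs2
    · -- Q D
      have hs2' : IsStem (q.sacks ε₂) v₂ := by rw [← H1 ε₂ h2p h2q]; exact hs2
      have hbase := hq5 ε₁ h1q ε₂ h2q hR1 hR2 hne (stemOf (q.sacks ε₁)) v₂
        (stemOf_spec (hq3 ε₁ h1q hR1)) hs2'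
      exact not_compat_ext hbase ((List.prefix_append _ [1]).trans hs1) List.prefix_rfl
    · -- Q P
      intro hcompat
      exact mixed ε₂ ε₁ v₂ v₁ h2p h2q h1p h1q hR2 hR1 hs2 hs1 (nodeCompat_symm hcompat)
    · -- Q Q
      have hbase := hq5 ε₁ h1q ε₂ h2q hR1 hR2 hne (stemOf (q.sacks ε₁)) (stemOf (q.sacks ε₂))
        (stemOf_spec (hq3 ε₁ h1q hR1)) (stemOf_spec (hq3 ε₂ h2q hR2))
      exact not_compat_ext hbase ((List.prefix_append _ [1]).trans hs1)
        ((List.prefix_append _ [1]).trans hs2)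
  · -- the trees
    intro α hα hnR
    by_cases hαp : α ∈ p.dom
    · have hεp : C.idx α ∈ p.dom := hp2 α hαp
      have hRε : C.idx α ∈ C.Root := C.idx_mem α
      obtain ⟨hp6a, hp6b, hp6c⟩ := hp6 α hαp hnR
      have hsub := hsubp (C.idx α) hεp hRε
      refine ⟨?_, ?_, ?_⟩
      · intro s hs
        rw [htrP α hαp hnR s hs]
        exact hp6a s (hsub hs)
      · intro s hs t ht hst
        rw [htrP α hαp hnR s hs, htrP α hαp hnR t ht]
        exact hp6b s (hsub hs) t (hsub ht) hst
      · intro l s hs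
        by_cases hεq : C.idx α ∈ q.dom
        · have heq : r.sacks (C.idx α) = p.sacks (C.idx α) :=
            AmalgSacks_D C p q hRε hεp hεq
          obtain ⟨s', hs', hpre, hls⟩ := hp6c l s (hsub hs)
          rw [← heq] at hs'
          refine ⟨s', hs', hpre, ?_⟩
          rwa [htrP α hαp hnR s' hs']
        · have heq : r.sacks (C.idx α) = Cone (p.sacks (C.idx α)) (stemOf (p.sacks (C.idx α)) ++ [0]) :=
            AmalgSacks_P C p q hRε hεp hεq
          have happ := cone_above (huP (C.idx α) hεp hRε)
            (fun s hsm => hp6c l s hsm) s (heq ▸ hs)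
          obtain ⟨s', hs', hpre, hls⟩ := happ
          rw [← heq] at hs'
          refine ⟨s', hs', hpre, ?_⟩
          rwa [htrP α hαp hnR s' hs']
    · have hαq : α ∈ q.dom := by
        rcases hα with h | h
        · exact absurd h hαp
        · exact h
      have hεq : C.idx α ∈ q.dom := hq2 α hαq
      have hRε : C.idx α ∈ C.Root := C.idx_mem α
      obtain ⟨hq6a, hq6b, hq6c⟩ := hq6 α hαq hnR
      have hsub := hsubq (C.idx α) hεq hRε
      refine ⟨?_, ?_, ?_⟩
      · intro s hs
        rw [htrQ α hαp hαq hnR s hs]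
        exact hq6a s (hsub hs)
      · intro s hs t ht hst
        rw [htrQ α hαp hαq hnR s hs, htrQ α hαp hαq hnR t ht]
        exact hq6b s (hsub hs) t (hsub ht) hst
      · intro l s hs
        by_cases hεp : C.idx α ∈ p.dom
        · have heq : r.sacks (C.idx α) = q.sacks (C.idx α) := by
            rw [hrs, AmalgSacks_D C p q hRε hεp hεq]
            exact H1 _ hεp hεq
          obtain ⟨s', hs', hpre, hls⟩ := hq6c l s (hsub hs)
          rw [← heq] at hs'
          refine ⟨s', hs', hpre, ?_⟩
          rwa [htrQ α hαp hαq hnR s' hs']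
        · have heq : r.sacks (C.idx α) = Cone (q.sacks (C.idx α)) (stemOf (q.sacks (C.idx α)) ++ [1]) :=
            AmalgSacks_Q C p q hRε hεp hεq
          have happ := cone_above (huQ (C.idx α) hεq hRε)
            (fun s hsm => hq6c l s hsm) s (heq ▸ hs)
          obtain ⟨s', hs', hpre, hls⟩ := happ
          rw [← heq] at hs'
          refine ⟨s', hs', hpre, ?_⟩
          rwa [htrQ α hαp hαq hnR s' hs']
  · -- normalization of tr
    intro α s h
    rw [hrt]
    show AmalgTr C p q α s = ∅
    rw [AmalgTr, if_neg]
    rintro ⟨hB, hA, hC⟩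
    exact h ⟨(Set.mem_union α p.dom q.dom).2 hA, hB, hC⟩
  · -- r ≤ p
    refine ⟨Set.subset_union_left, fun ε h hR => hsubp ε h hR, ?_⟩
    intro α hα hnR s hs
    rw [htrP α hα hnR s hs]
  · -- r ≤ q
    refine ⟨Set.subset_union_right, fun ε h hR => hsubq ε h hR, ?_⟩
    intro α hα hnR s hs
    by_cases hαp : α ∈ p.dom
    · rw [htrP α hαp hnR s hs, H2 α hαp hα]
    · rw [htrQ α hαp hα hnR s hs]

end Stmt8

namespace Stmt8
noncomputable section
open Cardinal Ordinal Set

local instance (o : Ordinal) : IsWellOrder o.ToType (· < ·) := isWellOrder_lt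

/-- ordinal rank within `o.ToType` -/
def ty {o : Ordinal} (x : o.ToType) : Ordinal := @typein o.ToType (· < ·) isWellOrder_lt x

theorem ty_lt {o : Ordinal} (x : o.ToType) : ty x < o := typein_lt_self x

def en {o : Ordinal} (x : Ordinal) (h : x < o) : o.ToType :=
  @enum o.ToType (· < ·) isWellOrder_lt ⟨x, by rwa [type_toType]⟩

theorem ty_en {o : Ordinal} (x : Ordinal) (h : x < o) : ty (en x h) = x :=
  @typein_enum o.ToType (· < ·) _ _ _

theorem ty_lt_ty {o : Ordinal} (x y : o.ToType) : ty x < ty y ↔ x < y :=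
  @typein_lt_typein o.ToType (· < ·) _ x y

theorem ty_le_ty {o : Ordinal} (x y : o.ToType) : ty x ≤ ty y ↔ x ≤ y := by
  simp only [← not_lt]
  exact not_congr (ty_lt_ty y x)

theorem ty_inj {o : Ordinal} {x y : o.ToType} (h : ty x = ty y) : x = y :=
  (@typein_inj o.ToType (· < ·) _ x y).1 h

theorem regular2 : (aleph 2).IsRegular := by
  have h : (2 : Ordinal) = Order.succ 1 := by rw [Order.succ_eq_add_one, one_add_one_eq_two]
  rw [h, aleph_succ]
  exact isRegular_succ (by simp [aleph0_le_aleph])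

/-- abbreviation for the ordinal `ω₂` -/
def kappa : Ordinal.{0} := (aleph 2).ord

theorem cof_kappa : kappa.cof = aleph 2 := regular2.cof_eq

theorem aleph0_le_two' : ℵ₀ ≤ aleph 2 := aleph0_le_aleph 2

theorem add_lt_kappa {a b : Ordinal} (ha : a < kappa) (hb : b < kappa) : a + b < kappa := by
  rw [kappa, lt_ord] at *
  rw [Ordinal.card_add]
  exact Cardinal.add_lt_of_lt aleph0_le_two' ha hb

theorem one_lt_kappa : 1 < kappa := by
  rw [kappa, lt_ord]
  simpa using one_lt_aleph0.trans_le aleph0_le_two'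

theorem succ_lt_kappa {a : Ordinal} (ha : a < kappa) : a + 1 < kappa :=
  add_lt_kappa ha one_lt_kappa

theorem zero_lt_kappa : 0 < kappa := lt_trans zero_lt_one one_lt_kappa

/-- the `ω₁`-chain construction -/
def gseq (h : Ordinal.{0} → Ordinal.{0}) : Ordinal.{0} → Ordinal.{0} :=
  Ordinal.lt_wf.fix fun ξ IH => (Ordinal.bsup.{0,0} ξ (fun η hη => IH η hη + h (IH η hη))) + 1

theorem gseq_eq (h : Ordinal.{0} → Ordinal.{0}) (ξ : Ordinal.{0}) :
    gseq h ξ = (Ordinal.bsup.{0,0} ξ (fun η _ => gseq h η + h (gseq h η))) + 1 := by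
  rw [gseq, WellFounded.fix_eq]

theorem gseq_lt {h : Ordinal.{0} → Ordinal.{0}} {η ξ : Ordinal.{0}} (hlt : η < ξ) :
    gseq h η < gseq h ξ := by
  rw [gseq_eq h ξ]
  have h1 : gseq h η ≤ gseq h η + h (gseq h η) := le_self_add
  have h2 := Ordinal.le_bsup (fun η (_ : η < ξ) => gseq h η + h (gseq h η)) η hlt
  have h3 : Ordinal.bsup ξ (fun η _ => gseq h η + h (gseq h η)) <
      Ordinal.bsup ξ (fun η _ => gseq h η + h (gseq h η)) + 1 := lt_add_one _
  exact lt_of_le_of_lt (h1.trans h2) h3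

theorem gseq_mono {h : Ordinal.{0} → Ordinal.{0}} {η ξ : Ordinal.{0}} (hle : η ≤ ξ) :
    gseq h η ≤ gseq h ξ := by
  rcases lt_or_eq_of_le hle with h' | h'
  · exact le_of_lt (gseq_lt h')
  · rw [h']

theorem h_gseq_lt {h : Ordinal.{0} → Ordinal.{0}} {η ξ : Ordinal.{0}} (hlt : η < ξ) :
    h (gseq h η) < gseq h ξ := by
  rw [gseq_eq h ξ]
  have h1 : h (gseq h η) ≤ gseq h η + h (gseq h η) := le_add_self
  have h2 := Ordinal.le_bsup (fun η (_ : η < ξ) => gseq h η + h (gseq h η)) η hlt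
  exact lt_of_le_of_lt (h1.trans h2) (lt_add_one _)

theorem gseq_lt_kappa {h : Ordinal.{0} → Ordinal.{0}} (hh : ∀ o < kappa, h o < kappa) :
    ∀ ξ, ξ ≤ (aleph 1).ord → gseq h ξ < kappa := by
  intro ξ
  induction ξ using Ordinal.induction with
  | h ξ IH =>
    intro hξ
    rw [gseq_eq]
    refine succ_lt_kappa ?_
    rw [kappa]
    refine Ordinal.bsup_lt_ord ?_ ?_
    · rw [regular2.cof_eq]
      calc ξ.card ≤ ((aleph 1).ord).card := Ordinal.card_le_card hξ
        _ = aleph 1 := card_ord _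
        _ < aleph 2 := by
            rw [aleph_lt_aleph]; norm_num
    · intro η hη
      have hg : gseq h η < kappa := IH η hη ((le_of_lt hη).trans hξ)
      exact add_lt_kappa hg (hh _ hg)

theorem bound_countable {c : Set Ordinal.{0}} (hc : c.Countable)
    (hlt : ∀ o ∈ c, o < kappa) : ∃ σ, σ < kappa ∧ ∀ o ∈ c, o < σ := by
  rcases c.eq_empty_or_nonempty with h | h
  · exact ⟨1, one_lt_kappa, by simp [h]⟩
  · obtain ⟨f, hf⟩ := hc.exists_eq_range h
    refine ⟨⨆ n, f n + 1, ?_, ?_⟩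
    · rw [kappa]
      refine Ordinal.iSup_lt_of_lt_cof ?_ ?_
      · rw [regular2.cof_eq]
        simp only [mk_nat]
        refine aleph0_lt_aleph_one.trans ?_
        rw [aleph_lt_aleph]; norm_num
      · intro n
        refine succ_lt_kappa (hlt _ ?_)
        rw [hf]; exact ⟨n, rfl⟩
    · intro o ho
      rw [hf] at ho
      obtain ⟨n, rfl⟩ := ho
      exact lt_of_lt_of_le (lt_add_one _) (Ordinal.le_iSup _ n)

theorem weak_fodor (b : kappa.ToType → Set Ordinal.{0}) (hc : ∀ i, (b i).Countable)
    (hlt : ∀ i, ∀ o ∈ b i, o < kappa) :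
    ∃ β, β < kappa ∧ ∀ γ : kappa.ToType, ∃ i : kappa.ToType,
      γ < i ∧ b i ∩ Set.Iio (ty i) ⊆ Set.Iio β := by
  by_contra hcon
  push_neg at hcon
  -- for every β < kappa a bound
  have hbound : ∀ β, β < kappa → ∃ γ : kappa.ToType, ∀ i : kappa.ToType,
      b i ∩ Set.Iio (ty i) ⊆ Set.Iio β → i ≤ γ := by
    intro β hβ
    obtain ⟨γ, hγ⟩ := hcon β hβ
    exact ⟨γ, fun i hi => not_lt.1 (fun hlt' => (hγ i hlt') hi)⟩
  classical
  have hbound' : ∀ β : Ordinal.{0}, ∃ γ : kappa.ToType, β < kappa → ∀ i : kappa.ToType,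
      b i ∩ Set.Iio (ty i) ⊆ Set.Iio β → i ≤ γ := by
    intro β
    by_cases hβ : β < kappa
    · obtain ⟨γ, hγ⟩ := hbound β hβ
      exact ⟨γ, fun _ => hγ⟩
    · have : Nonempty kappa.ToType := by
        rw [toType_nonempty_iff_ne_zero]
        exact fun h0 => absurd (h0 ▸ zero_lt_kappa) (lt_irrefl _)
      exact ⟨Classical.arbitrary _, fun h => absurd h hβ⟩
  choose γf hγf using hbound'
  set h : Ordinal.{0} → Ordinal.{0} := fun β => ty (γf β) + 1 with hh_def
  have hh : ∀ o < kappa, h o < kappa := by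
    intro o _
    exact succ_lt_kappa (ty_lt _)
  set ω1o := (aleph 1).ord with hω1o
  have hω1o_pos : 0 < ω1o := by
    rw [hω1o, pos_iff_ne_zero]
    intro h0
    have := congrArg Ordinal.card h0
    rw [card_ord] at this
    simp only [Ordinal.card_zero] at this
    exact absurd this (ne_of_gt (aleph_pos 1))
  set δ := Ordinal.bsup ω1o (fun η (_ : η < ω1o) => gseq h η) with hδdef
  have hδκ : δ < kappa := by
    rw [hδdef, kappa]
    refine Ordinal.bsup_lt_ord ?_ ?_
    · rw [regular2.cof_eq, hω1o, card_ord, aleph_lt_aleph]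
      norm_num
    · intro η hη
      exact gseq_lt_kappa hh η (le_of_lt hη)
  set i₀ : kappa.ToType := en δ hδκ with hi₀
  have hty : ty i₀ = δ := ty_en δ hδκ
  -- bound the countable set
  have hcb : ∃ ξ, ξ < ω1o ∧ ∀ o ∈ b i₀ ∩ Set.Iio (ty i₀), o < gseq h ξ := by
    set c := b i₀ ∩ Set.Iio (ty i₀) with hcdef
    have hcc : c.Countable := (hc i₀).mono (Set.inter_subset_left)
    rcases c.eq_empty_or_nonempty with hemp | hne
    · exact ⟨0, hω1o_pos, by simp [hemp]⟩
    · obtain ⟨f, hf⟩ := hcc.exists_eq_range hne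
      have hfδ : ∀ n, f n < δ := by
        intro n
        have : f n ∈ c := by rw [hf]; exact ⟨n, rfl⟩
        have := this.2
        rwa [hty] at this
      have hex : ∀ n, ∃ η, ∃ _ : η < ω1o, f n < gseq h η := by
        intro n
        exact (Ordinal.lt_bsup _).1 (hfδ n)
      choose η hη1 hη2 using hex
      refine ⟨⨆ n, η n, ?_, ?_⟩
      · rw [hω1o]
        refine Ordinal.iSup_lt_of_lt_cof ?_ (fun n => hη1 n)
        rw [isRegular_aleph_one.cof_eq]
        simpa using aleph0_lt_aleph_one
      · intro o ho
        rw [hf] at ho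
        obtain ⟨n, rfl⟩ := ho
        exact lt_of_lt_of_le (hη2 n) (gseq_mono (Ordinal.le_iSup _ n))
  obtain ⟨ξ, hξ, hcb⟩ := hcb
  have hgξκ : gseq h ξ < kappa := gseq_lt_kappa hh ξ (le_of_lt hξ)
  have hsub : b i₀ ∩ Set.Iio (ty i₀) ⊆ Set.Iio (gseq h ξ) := fun o ho => hcb o ho
  have hle := hγf (gseq h ξ) hgξκ i₀ hsub
  -- but δ is above the bound
  have h1 : h (gseq h ξ) < gseq h (ξ + 1) := h_gseq_lt (lt_add_one _)
  have h2 : gseq h (ξ + 1) ≤ δ := by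
    rw [hδdef]
    have hξ1 : ξ + 1 < ω1o := by
      rw [hω1o]
      have := (Cardinal.isSuccLimit_ord (aleph0_le_aleph 1)).succ_lt (hω1o ▸ hξ)
      simpa [Order.succ] using this
    exact Ordinal.le_bsup (fun η (_ : η < ω1o) => gseq h η) (ξ+1) hξ1
  have h3 : ty i₀ < h (gseq h ξ) := by
    simp only [hh_def]
    exact lt_of_le_of_lt ((ty_le_ty i₀ (γf (gseq h ξ))).2 hle) (lt_add_one _)
  have hfin : ty i₀ < ty i₀ := lt_of_lt_of_le (h3.trans h1) (h2.trans_eq hty.symm)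
  exact absurd hfin (lt_irrefl _)

theorem fiber_unbounded {T : Type} (f : kappa.ToType → T) (S : Set T)
    (hS : #S < aleph 2) (hf : ∀ i, f i ∈ S) (P : kappa.ToType → Prop)
    (hub : ∀ γ : kappa.ToType, ∃ i, γ < i ∧ P i) :
    ∃ t : T, ∀ γ : kappa.ToType, ∃ i, γ < i ∧ P i ∧ f i = t := by
  by_contra hcon
  push_neg at hcon
  classical
  have hcon' : ∀ t : T, ∃ γ : kappa.ToType, ∀ i, γ < i → P i → f i ≠ t := by
    intro t
    obtain ⟨γ, hγ⟩ := hcon t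
    exact ⟨γ, fun i h1 h2 => (hγ i h1 h2)⟩
  choose g hg using hcon'
  have hσ : ⨆ t : S, ty (g ↑t) + 1 < kappa := by
    show _ < (aleph 2).ord
    refine Ordinal.iSup_lt_of_lt_cof ?_ ?_
    · rwa [regular2.cof_eq]
    · intro t
      exact succ_lt_kappa (ty_lt _)
  obtain ⟨i, hi1, hi2⟩ := hub (en _ hσ)
  have := hg (f i) i ?_ hi2 rfl
  · exact this
  · have h1 : ty (g (f i)) + 1 ≤ ty (en _ hσ) := by
      rw [ty_en]
      exact Ordinal.le_iSup (fun t : S => ty (g ↑t) + 1) (⟨f i, hf i⟩ : S)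
    have h2 : ty (en _ hσ) < ty i := (ty_lt_ty _ _).2 hi1
    rw [← ty_lt_ty]
    exact lt_of_lt_of_le (lt_of_lt_of_le (lt_add_one _) h1) (le_of_lt h2)

theorem aleph1_pow_aleph0 (hCH : (2 : Cardinal.{0}) ^ Cardinal.aleph0 = Cardinal.aleph 1) :
    (aleph 1 : Cardinal.{0}) ^ (ℵ₀ : Cardinal.{0}) = aleph 1 := by
  rw [← hCH, ← Cardinal.power_mul, aleph0_mul_aleph0]

open Classical in
/-- decoding of countable partial data -/
noncomputable def encodeFn {W' X : Type} (d : X)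
    (cS : (ℕ → Option (W' × X)) × Set (List ℕ)) : Set W' × (W' → X) × Set (List ℕ) :=
  ({w | ∃ n x, cS.1 n = some (w, x)},
   fun w => if h : ∃ px : W' × X, (∃ n, cS.1 n = some px) ∧ px.1 = w then h.choose.2 else d,
   cS.2)

theorem type_count {W' X : Type} (hW : #W' ≤ aleph 1) (hX : #X ≤ aleph 1) (d : X)
    (hCH : (2 : Cardinal.{0}) ^ Cardinal.aleph0 = Cardinal.aleph 1) :
    #({F : Set W' × (W' → X) × Set (List ℕ) | F.1.Countable ∧ ∀ w ∉ F.1, F.2.1 w = d}) ≤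
      aleph 1 := by
  classical
  have hsub : {F : Set W' × (W' → X) × Set (List ℕ) | F.1.Countable ∧ ∀ w ∉ F.1, F.2.1 w = d}
      ⊆ Set.range (encodeFn d) := by
    rintro ⟨R, F, S⟩ ⟨hR, hF⟩
    dsimp only at hR hF
    rcases R.eq_empty_or_nonempty with hemp | hne
    · refine ⟨(fun _ => none, S), ?_⟩
      have h1 : {w : W' | ∃ n x, (fun _ : ℕ => (none : Option (W' × X))) n = some (w, x)}
          = R := by
        rw [hemp]; ext w; simp
      have h2 : (fun w : W' => if h : ∃ px : W' × X,
          (∃ n, (fun _ : ℕ => (none : Option (W' × X))) n = some px) ∧ px.1 = w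
          then h.choose.2 else d) = F := by
        funext w
        rw [dif_neg]
        · exact (hF w (by rw [hemp]; exact Set.notMem_empty w)).symm
        · rintro ⟨px, ⟨n, hn⟩, _⟩
          simp at hn
      exact Prod.ext_iff.2 ⟨h1, Prod.ext_iff.2 ⟨h2, rfl⟩⟩
    · obtain ⟨f, hfR⟩ := hR.exists_eq_range hne
      have hfR' : R = Set.range f := hfR
      set c : ℕ → Option (W' × X) := fun n => some (f n, F (f n)) with hc
      refine ⟨(c, S), ?_⟩
      have h1 : {w : W' | ∃ n x, c n = some (w, x)} = R := by
        rw [hfR']; ext w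
        simp only [Set.mem_setOf_eq, hc, Option.some.injEq, Prod.mk.injEq, Set.mem_range]
        constructor
        · rintro ⟨n, x, h1, _⟩; exact ⟨n, h1⟩
        · rintro ⟨n, rfl⟩; exact ⟨n, F (f n), rfl, rfl⟩
      have h2 : (fun w : W' => if h : ∃ px : W' × X,
          (∃ n, c n = some px) ∧ px.1 = w then h.choose.2 else d) = F := by
        funext w
        by_cases hw : w ∈ R
        · have hex : ∃ px : W' × X, (∃ n, c n = some px) ∧ px.1 = w := by
            rw [hfR'] at hw
            obtain ⟨n, hn⟩ := hw
            exact ⟨(f n, F (f n)), ⟨n, rfl⟩, hn⟩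
          rw [dif_pos hex]
          obtain ⟨⟨n, hn⟩, hfst⟩ := hex.choose_spec
          simp only [hc] at hn
          injection hn with hpx
          rw [← hpx] at hfst ⊢
          dsimp only at hfst ⊢
          rw [hfst]
        · have hnex : ¬ ∃ px : W' × X, (∃ n, c n = some px) ∧ px.1 = w := by
            rintro ⟨px, ⟨n, hn⟩, hfst⟩
            simp only [hc, Option.some.injEq] at hn
            apply hw
            rw [hfR', ← hfst, ← hn]
            exact ⟨n, rfl⟩
          rw [dif_neg hnex]
          exact (hF w hw).symm
      exact Prod.ext_iff.2 ⟨h1, Prod.ext_iff.2 ⟨h2, rfl⟩⟩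
  have h1 : #({F : Set W' × (W' → X) × Set (List ℕ) | F.1.Countable ∧ ∀ w ∉ F.1, F.2.1 w = d})
      ≤ #(Set.range (encodeFn d)) := Cardinal.mk_le_mk_of_subset hsub
  have h2 : #(Set.range (encodeFn (W' := W') d)) ≤ #((ℕ → Option (W' × X)) × Set (List ℕ)) :=
    Cardinal.mk_range_le
  refine h1.trans (h2.trans ?_)
  have hWX : #(W' × X) ≤ aleph 1 := by
    rw [Cardinal.mk_prod, Cardinal.lift_id, Cardinal.lift_id]
    calc #W' * #X ≤ aleph 1 * aleph 1 := mul_le_mul' hW hX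
      _ = aleph 1 := Cardinal.mul_eq_self (aleph0_le_aleph 1)
  have hOpt : #(Option (W' × X)) ≤ aleph 1 := by
    rw [Cardinal.mk_option]
    calc #(W' × X) + 1 ≤ aleph 1 + aleph 1 :=
          add_le_add hWX (one_le_aleph0.trans (aleph0_le_aleph 1))
      _ = aleph 1 := Cardinal.add_eq_self (aleph0_le_aleph 1)
  have hfun : #(ℕ → Option (W' × X)) ≤ aleph 1 := by
    rw [← Cardinal.power_def, Cardinal.mk_nat]
    calc #(Option (W' × X)) ^ (ℵ₀ : Cardinal) ≤ (aleph 1) ^ (ℵ₀ : Cardinal) :=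
          Cardinal.power_le_power_right hOpt
      _ = aleph 1 := aleph1_pow_aleph0 hCH
  have hset : #(Set (List ℕ)) ≤ aleph 1 := by
    rw [Cardinal.mk_set, Cardinal.mk_list_eq_aleph0, hCH]
  rw [Cardinal.mk_prod, Cardinal.lift_id, Cardinal.lift_id]
  calc #(ℕ → Option (W' × X)) * #(Set (List ℕ)) ≤ aleph 1 * aleph 1 := mul_le_mul' hfun hset
    _ = aleph 1 := Cardinal.mul_eq_self (aleph0_le_aleph 1)

end
end Stmt8

namespace Stmt8
open Cardinal Ordinal

universe u

theorem CH_zero (hCH : (2 : Cardinal.{u}) ^ Cardinal.aleph0 = Cardinal.aleph 1) :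
    (2 : Cardinal.{0}) ^ Cardinal.aleph0 = Cardinal.aleph 1 := by
  apply Cardinal.lift_injective.{u, 0}
  rw [Cardinal.lift_power, Cardinal.lift_aleph0, Cardinal.lift_aleph]
  simp only [Cardinal.lift_ofNat, Ordinal.lift_one]
  exact hCH

theorem aleph_two_eq_succ : (aleph 2 : Cardinal.{0}) = Order.succ (aleph 1) := by
  have h : (2 : Ordinal) = Order.succ 1 := by rw [Order.succ_eq_add_one, one_add_one_eq_two]
  rw [h, aleph_succ]

end Stmt8

theorem stmt8' (G : GrowthPair) {ι : Type} (C : IdxCtx ι)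
    (hCH : (2 : Cardinal.{0}) ^ Cardinal.aleph0 = Cardinal.aleph 1)
    (A : Set (Cond ι)) (hA : ∀ p ∈ A, InP G C p)
    (hanti : ∀ p ∈ A, ∀ q ∈ A, p ≠ q →
      ¬ ∃ r : Cond ι, InP G C r ∧ CondLE C r p ∧ CondLE C r q) :
    Cardinal.mk A ≤ Cardinal.aleph 1 := by
  classical
  open Cardinal Ordinal Stmt8 in
  by_contra hbig
  push_neg at hbig
  have h2le : Cardinal.aleph 2 ≤ Cardinal.mk A := by
    rw [Stmt8.aleph_two_eq_succ]
    exact Order.succ_le_of_lt hbig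
  have hOA : Cardinal.mk (Stmt8.kappa.ToType) = Cardinal.aleph 2 := Cardinal.mk_ord_toType _
  have hle1 : Cardinal.mk (Stmt8.kappa.ToType) ≤ Cardinal.mk ↥A := by rw [hOA]; exact h2le
  obtain ⟨emb⟩ := (Cardinal.le_def _ _).1 hle1
  set Pc : Stmt8.kappa.ToType → Cond ι := fun i => (emb i : Cond ι) with hPc
  have hPinj : ∀ i j, Pc i = Pc j → i = j := fun i j h => emb.injective (Subtype.ext h)
  have hInP : ∀ i, InP G C (Pc i) := fun i => hA _ (emb i).2
  haveI hne0 : Nonempty Stmt8.kappa.ToType := by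
    rw [Ordinal.toType_nonempty_iff_ne_zero]
    intro h0
    exact absurd (h0 ▸ Stmt8.zero_lt_kappa) (lt_irrefl _)
  set UU : Set ι := ⋃ i, (Pc i).dom with hUU
  have hUUmem : ∀ i, ∀ u ∈ (Pc i).dom, u ∈ UU := fun i u hu => Set.mem_iUnion.2 ⟨i, hu⟩
  have hUUcard : Cardinal.mk ↥UU ≤ Cardinal.aleph 2 := by
    refine (Cardinal.mk_iUnion_le _).trans ?_
    have hsup : (⨆ i, Cardinal.mk ↥((Pc i).dom)) ≤ Cardinal.aleph0 := by
      refine ciSup_le fun i => ?_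
      exact Cardinal.mk_le_aleph0_iff.2 (Set.countable_coe_iff.2 (hInP i).1)
    calc Cardinal.mk (Stmt8.kappa.ToType) * (⨆ i, Cardinal.mk ↥((Pc i).dom))
        ≤ Cardinal.aleph 2 * Cardinal.aleph0 := by
          rw [hOA]; exact mul_le_mul' le_rfl hsup
      _ = Cardinal.aleph 2 := by
          rw [Cardinal.mul_eq_max (Cardinal.aleph0_le_aleph 2) le_rfl]
          simp [Cardinal.aleph0_le_aleph 2]
  have hle2 : Cardinal.mk ↥UU ≤ Cardinal.mk (Stmt8.kappa.ToType) := by rw [hOA]; exact hUUcard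
  obtain ⟨e⟩ := (Cardinal.le_def _ _).1 hle2
  set b : Stmt8.kappa.ToType → Set Ordinal.{0} :=
    fun i => (fun u : ↥UU => Stmt8.ty (e u)) '' {u : ↥UU | ↑u ∈ (Pc i).dom} with hb
  have hbc : ∀ i, (b i).Countable :=
    fun i => (((hInP i).1).preimage Subtype.val_injective).image _
  have hblt : ∀ i, ∀ o ∈ b i, o < Stmt8.kappa := by
    rintro i o ⟨u, _, rfl⟩; exact Stmt8.ty_lt _
  obtain ⟨β, hβκ, hub⟩ := Stmt8.weak_fodor b hbc hblt
  set W : Set ι := {u : ι | ∃ hu : u ∈ UU, Stmt8.ty (e ⟨u, hu⟩) < β} with hW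
  have hWcard : Cardinal.mk ↥W ≤ Cardinal.aleph 1 := by
    have hf : ∀ u : ↥W, Stmt8.ty (e ⟨u.1, u.2.choose⟩) < β := fun u => u.2.choose_spec
    set f : ↥W → β.ToType := fun u => Stmt8.en _ (hf u) with hfd
    have hinj : Function.Injective f := by
      intro u v huv
      have h1 : Stmt8.ty (f u) = Stmt8.ty (f v) := by rw [huv]
      rw [hfd] at h1
      simp only [Stmt8.ty_en] at h1
      have h2 : e ⟨u.1, u.2.choose⟩ = e ⟨v.1, v.2.choose⟩ := Stmt8.ty_inj h1
      have h3 := e.injective h2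
      have h4 := congrArg (Subtype.val : ↥UU → ι) h3
      exact Subtype.ext h4
    calc Cardinal.mk ↥W ≤ Cardinal.mk β.ToType := Cardinal.mk_le_of_injective hinj
      _ = β.card := Cardinal.mk_toType β
      _ ≤ Cardinal.aleph 1 := by
          have := (Cardinal.lt_ord).1 hβκ
          rw [Stmt8.aleph_two_eq_succ] at this
          exact Order.lt_succ_iff.1 this
  set X := (Set (List ℕ) × (List ℕ → Set (List ℕ))) with hXd
  have hset1 : Cardinal.mk (Set (List ℕ)) = Cardinal.aleph 1 := by
    rw [Cardinal.mk_set, Cardinal.mk_list_eq_aleph0, hCH]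
  have hXcard : Cardinal.mk X ≤ Cardinal.aleph 1 := by
    rw [hXd, Cardinal.mk_prod, Cardinal.lift_id, Cardinal.lift_id]
    have hset2 : Cardinal.mk (List ℕ → Set (List ℕ)) = Cardinal.aleph 1 := by
      rw [← Cardinal.power_def, Cardinal.mk_list_eq_aleph0, hset1]
      exact Stmt8.aleph1_pow_aleph0 hCH
    rw [hset1, hset2, Cardinal.mul_eq_self (Cardinal.aleph0_le_aleph 1)]
  set τ : Stmt8.kappa.ToType → Set ↥W × (↥W → X) × Set (List ℕ) := fun i =>
    ({w : ↥W | ↑w ∈ (Pc i).dom}, fun w => ((Pc i).sacks ↑w, (Pc i).tr ↑w),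
      Stmt8.StemSet C (Pc i)) with hτ
  set dX : X := ((∅ : Set (List ℕ)), fun _ => (∅ : Set (List ℕ))) with hdX
  set GS : Set (Set ↥W × (↥W → X) × Set (List ℕ)) :=
    {F | F.1.Countable ∧ ∀ w ∉ F.1, F.2.1 w = dX} with hGS
  have hτG : ∀ i, τ i ∈ GS := by
    intro i
    constructor
    · exact ((hInP i).1).preimage Subtype.val_injective
    · intro w hw
      have hwd : ↑w ∉ (Pc i).dom := hw
      have h1 : (Pc i).sacks ↑w = ∅ := (hInP i).2.2.2.1 ↑w (fun hc => hwd hc.1)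
      have h2 : (Pc i).tr ↑w = fun _ => ∅ := by
        funext s
        exact (hInP i).2.2.2.2.2.2 ↑w s (fun hc => hwd hc.1)
      rw [hdX]
      exact Prod.ext_iff.2 ⟨h1, h2⟩
  have hGScard : Cardinal.mk ↥GS ≤ Cardinal.aleph 1 :=
    Stmt8.type_count hWcard hXcard dX hCH
  have hGSlt : Cardinal.mk ↥GS < Cardinal.aleph 2 := by
    refine lt_of_le_of_lt hGScard ?_
    rw [Cardinal.aleph_lt_aleph]
    norm_num
  obtain ⟨t, hub2⟩ := Stmt8.fiber_unbounded τ GS hGSlt hτG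
    (fun i => b i ∩ Set.Iio (Stmt8.ty i) ⊆ Set.Iio β) hub
  obtain ⟨i, _, hT0i, hτi⟩ := hub2 (Classical.arbitrary _)
  obtain ⟨σ, hσκ, hσ⟩ := Stmt8.bound_countable (hbc i) (hblt i)
  have hmaxlt : max σ (Stmt8.ty i) < Stmt8.kappa := max_lt hσκ (Stmt8.ty_lt i)
  obtain ⟨j, hij, hT0j, hτj⟩ := hub2 (Stmt8.en _ hmaxlt)
  have htyj : max σ (Stmt8.ty i) < Stmt8.ty j := by
    rw [← Stmt8.ty_en _ hmaxlt]
    exact (Stmt8.ty_lt_ty _ _).2 hij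
  have hine : i ≠ j := by
    intro h
    subst h
    exact absurd (lt_of_le_of_lt (le_max_right σ (Stmt8.ty i)) htyj) (lt_irrefl _)
  have hττ : τ i = τ j := hτi.trans hτj.symm
  have hDW : ∀ u, u ∈ (Pc i).dom → u ∈ (Pc j).dom → u ∈ W := by
    intro u hui huj
    have huU : u ∈ UU := hUUmem i u hui
    have h1 : Stmt8.ty (e ⟨u, huU⟩) ∈ b i := ⟨⟨u, huU⟩, hui, rfl⟩
    have h2 : Stmt8.ty (e ⟨u, huU⟩) ∈ b j := ⟨⟨u, huU⟩, huj, rfl⟩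
    have h3 : Stmt8.ty (e ⟨u, huU⟩) < σ := hσ _ h1
    have h4 : Stmt8.ty (e ⟨u, huU⟩) < Stmt8.ty j :=
      lt_of_lt_of_le h3 ((le_max_left σ (Stmt8.ty i)).trans (le_of_lt htyj))
    have h5 := hT0j ⟨h2, h4⟩
    exact ⟨huU, h5⟩
  have hRset : {w : ↥W | ↑w ∈ (Pc i).dom} = {w : ↥W | ↑w ∈ (Pc j).dom} :=
    congrArg Prod.fst hττ
  have hFfun : (fun w : ↥W => ((Pc i).sacks ↑w, (Pc i).tr ↑w))
      = (fun w : ↥W => ((Pc j).sacks ↑w, (Pc j).tr ↑w)) :=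
    congrArg (fun z => z.2.1) hττ
  have H3 : Stmt8.StemSet C (Pc i) = Stmt8.StemSet C (Pc j) :=
    congrArg (fun z => z.2.2) hττ
  have H1 : ∀ ε, ε ∈ (Pc i).dom → ε ∈ (Pc j).dom → (Pc i).sacks ε = (Pc j).sacks ε := by
    intro ε h1 h2
    have hw : ε ∈ W := hDW ε h1 h2
    have := congrFun hFfun ⟨ε, hw⟩
    exact congrArg Prod.fst this
  have H2 : ∀ α, α ∈ (Pc i).dom → α ∈ (Pc j).dom → (Pc i).tr α = (Pc j).tr α := by
    intro α h1 h2
    have hw : α ∈ W := hDW α h1 h2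
    have := congrFun hFfun ⟨α, hw⟩
    exact congrArg Prod.snd this
  obtain ⟨hrP, hrp, hrq⟩ := Stmt8.amalg_spec (hInP i) (hInP j) H1 H2 H3
  exact hanti (Pc i) (emb i).2 (Pc j) (emb j).2 (fun h => hine (hPinj _ _ h))
    ⟨_, hrP, hrp, hrq⟩

/-- Assuming CH, the poset `P` is `ℵ₂`-cc: every antichain has size at most `ℵ₁`. -/
theorem stmt8 (G : GrowthPair) {ι : Type} (C : IdxCtx ι)
    (hCH : (2 : Cardinal) ^ Cardinal.aleph0 = Cardinal.aleph 1)
    (A : Set (Cond ι)) (hA : ∀ p ∈ A, InP G C p)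
    (hanti : ∀ p ∈ A, ∀ q ∈ A, p ≠ q →
      ¬ ∃ r : Cond ι, InP G C r ∧ CondLE C r p ∧ CondLE C r q) :
    Cardinal.mk A ≤ Cardinal.aleph 1 := by
  exact stmt8' G C (Stmt8.CH_zero hCH) A hA hanti
end
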